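/- Let n, p be positive integers, let U ∈ ℝ^{n×p} have unit-norm rows (diag(U Uᵀ) = 𝟏), and let z ∈ ℝⁿ. For v ∈ ℝ^p define Ů_v := z vᵀ − ddiag(z vᵀ Uᵀ)·U (the orthogonal projection of z vᵀ onto the tangent space {W : diag(U Wᵀ + W Uᵀ) = 0}). Then for every orthonormal basis {v_1, …, v_p} of ℝ^p: ∑_{k=1}^p Ů_{v_k} Ů_{v_k}ᵀ = (p − 2)·z zᵀ + D_z (U Uᵀ)^{∘2} D_z, where D_z := diag(z) and (U Uᵀ)^{∘2} is the entrywise square of U Uᵀ. -/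
import Mathlib


open Matrix Filter Finset
open scoped Classical

noncomputable section

/-- Frobenius inner product `⟨A, B⟩ = tr(Bᵀ A)` of real square matrices. -/
def mip {d : ℕ} (A B : Matrix (Fin d) (Fin d) ℝ) : ℝ := (Bᵀ * A).trace

/-- Squared Frobenius norm of a real matrix. -/
def frobSq {m p : ℕ} (X : Matrix (Fin m) (Fin p) ℝ) : ℝ := ∑ i, ∑ j, (X i j) ^ 2

/-- Squared Euclidean norm of a real vector. -/
def vnormSq {n : ℕ} (v : Fin n → ℝ) : ℝ := ∑ i, (v i) ^ 2

/-- Euclidean norm of a real vector. -/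
def vnorm {n : ℕ} (v : Fin n → ℝ) : ℝ := Real.sqrt (vnormSq v)

/-- Euclidean inner product of real vectors. -/
def vip {n : ℕ} (u v : Fin n → ℝ) : ℝ := ∑ i, u i * v i

/-- `ddiag A` keeps the diagonal of `A`, setting off-diagonal entries to zero. -/
def ddiag {n : ℕ} (A : Matrix (Fin n) (Fin n) ℝ) : Matrix (Fin n) (Fin n) ℝ :=
  Matrix.diagonal fun i => A i i

/-- `rowNorms M` is the vector of Euclidean norms of the rows of `M` (`|M|`). -/
def rowNorms {n k : ℕ} (M : Matrix (Fin n) (Fin k) ℝ) : Fin n → ℝ :=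
  fun i => Real.sqrt (∑ j, (M i j) ^ 2)

/-- Tangent-space identity: summing the projected rank-one directions
`Ů_v = zvᵀ − ddiag(zvᵀUᵀ)U` over an orthonormal basis `{v₁, …, v_p}` of `ℝ^p`
gives `(p − 2)·zzᵀ + D_z (UUᵀ)^{∘2} D_z`. -/
theorem stmt19 {n p : ℕ} (hn : 0 < n) (hp : 0 < p)
    (U : Matrix (Fin n) (Fin p) ℝ) (hU : ∀ i, (U * Uᵀ) i i = 1)
    (z : Fin n → ℝ)
    (Udot : (Fin p → ℝ) → Matrix (Fin n) (Fin p) ℝ)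
    (hUdot : ∀ v, Udot v = Matrix.vecMulVec z v
        - ddiag (Matrix.vecMulVec z v * Uᵀ) * U) :
    ∀ v : Fin p → (Fin p → ℝ),
      (∀ k l, vip (v k) (v l) = if k = l then (1:ℝ) else 0) →
      ∑ k, Udot (v k) * (Udot (v k))ᵀ =
        ((p:ℝ) - 2) • Matrix.vecMulVec z z
          + Matrix.diagonal z * Matrix.hadamard (U * Uᵀ) (U * Uᵀ)
            * Matrix.diagonal z := by

  intro v hv
  -- column orthonormality
  have hcol : ∀ a b : Fin p, ∑ k, v k a * v k b = if a = b then (1:ℝ) else 0 := by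
    have h1 : (Matrix.of v) * (Matrix.of v)ᵀ = 1 := by
      ext k l
      have := hv k l
      simpa [Matrix.mul_apply, Matrix.one_apply, vip] using this
    have h2 : (Matrix.of v)ᵀ * (Matrix.of v) = 1 := mul_eq_one_comm.mp h1
    intro a b
    have := congrFun (congrFun h2 a) b
    simpa [Matrix.mul_apply, Matrix.one_apply, mul_comm] using this
  have hS : ∀ i j : Fin n, ∑ k, (∑ a, v k a * U i a) * (∑ b, v k b * U j b)
      = (U * Uᵀ) i j := by
    intro i j
    have h1 : ∀ k : Fin p, (∑ a, v k a * U i a) * (∑ b, v k b * U j b)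
        = ∑ a, ∑ b, (U i a * U j b) * (v k a * v k b) := by
      intro k
      rw [Finset.sum_mul_sum]
      exact Finset.sum_congr rfl fun a _ => Finset.sum_congr rfl fun b _ => by ring
    simp_rw [h1]
    rw [Finset.sum_comm]
    have h2 : ∀ a : Fin p, ∑ k, ∑ b, (U i a * U j b) * (v k a * v k b)
        = ∑ b, (U i a * U j b) * (∑ k, v k a * v k b) := by
      intro a
      rw [Finset.sum_comm]
      exact Finset.sum_congr rfl fun b _ => by rw [Finset.mul_sum]
    simp_rw [h2, hcol]
    simp [Matrix.mul_apply, mul_ite]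
  have hentry : ∀ (k : Fin p) (i : Fin n) (m : Fin p), Udot (v k) i m
      = z i * v k m - z i * (∑ a, v k a * U i a) * U i m := by
    intro k i m
    rw [hUdot]
    simp only [Matrix.sub_apply, Matrix.vecMulVec_apply, ddiag, Matrix.mul_apply,
      Matrix.transpose_apply, Matrix.diagonal_apply, ite_mul, zero_mul,
      Finset.sum_ite_eq, Finset.mem_univ, if_true, Finset.sum_mul, Finset.mul_sum]
    congr 1
    exact Finset.sum_congr rfl fun a _ => by ring
  have hQ : ∀ k, ∑ m, v k m * v k m = (1:ℝ) := by
    intro k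
    have := hv k k
    simpa [vip] using this
  ext i j
  rw [Matrix.sum_apply]
  have hterm : ∀ k, (Udot (v k) * (Udot (v k))ᵀ) i j
      = z i * z j * ((∑ m, v k m * v k m)
          - (∑ a, v k a * U j a) * (∑ a, v k a * U j a)
          - (∑ a, v k a * U i a) * (∑ a, v k a * U i a)
          + (∑ a, v k a * U i a) * ((∑ a, v k a * U j a) * (U * Uᵀ) i j)) := by
    intro k
    rw [Matrix.mul_apply]
    simp only [Matrix.transpose_apply, hentry]
    have hm : ∀ m : Fin p,
        (z i * v k m - z i * (∑ a, v k a * U i a) * U i m)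
          * (z j * v k m - z j * (∑ a, v k a * U j a) * U j m)
        = z i * z j * (v k m * v k m)
          - (z i * z j * (∑ a, v k a * U j a)) * (v k m * U j m)
          - (z i * z j * (∑ a, v k a * U i a)) * (v k m * U i m)
          + (z i * z j * (∑ a, v k a * U i a) * (∑ a, v k a * U j a))
              * (U i m * U j m) := by
      intro m; ring
    simp_rw [hm]
    rw [Finset.sum_add_distrib, Finset.sum_sub_distrib, Finset.sum_sub_distrib,
      ← Finset.mul_sum, ← Finset.mul_sum, ← Finset.mul_sum, ← Finset.mul_sum]
    have hUU : (∑ m, U i m * U j m) = (U * Uᵀ) i j := by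
      simp [Matrix.mul_apply]
    rw [hUU]
    ring
  simp_rw [hterm, hQ]
  have hR : (((p:ℝ) - 2) • Matrix.vecMulVec z z
      + Matrix.diagonal z * Matrix.hadamard (U * Uᵀ) (U * Uᵀ) * Matrix.diagonal z) i j
      = ((p:ℝ) - 2) * (z i * z j)
        + z i * ((U * Uᵀ) i j * (U * Uᵀ) i j) * z j := by
    simp [Matrix.add_apply, Matrix.smul_apply, Matrix.vecMulVec_apply,
      Matrix.diagonal_mul, Matrix.mul_diagonal, Matrix.hadamard_apply, smul_eq_mul]
  rw [hR, ← Finset.mul_sum]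
  have hC : ∀ x : Fin p, (∑ a, v x a * U i a) * ((∑ a, v x a * U j a) * (U * Uᵀ) i j)
      = ((∑ a, v x a * U i a) * (∑ b, v x b * U j b)) * (U * Uᵀ) i j := fun x => by ring
  simp_rw [hC]
  rw [Finset.sum_add_distrib, Finset.sum_sub_distrib, Finset.sum_sub_distrib,
    ← Finset.sum_mul, hS i j, hS i i, hS j j, hU i, hU j, Finset.sum_const,
    Finset.card_univ, Fintype.card_fin, nsmul_eq_mul, mul_one]
  ring
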